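/- Let M, a, s be positive integers with M > 1 such that ∑_{i=0}^{M-1} (a+i)^2 = s^2. If M = 24·m₁ + 9 for a nonnegative integer m₁, then for every integer i ≥ 1 one has m₁ ≢ 3·(3^(2i-2) − 1)/8 (mod 3^(2i)) and m₁ ≢ 2·3^(2i-1) + 3·(3^(2i-2) − 1)/8 (mod 3^(2i)). (For i ≥ 1, 3^(2i-2) − 1 = 9^(i-1) − 1 is divisible by 8, so these residues are integers.) -/

import Mathlib

private lemma sumsq (a : ℕ) : ∀ n : ℕ,
    6 * ∑ i ∈ Finset.range (n + 1), (a + i) ^ 2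
      = (n + 1) * (6 * a ^ 2 + 6 * a * n + n * (2 * n + 1)) := by
  intro n
  induction n with
  | zero => simp
  | succ n ih =>
    rw [Finset.sum_range_succ, Nat.mul_add, ih]
    ring

private lemma key (s T q i : ℕ) (hs : 1 ≤ s) (hi : 1 ≤ i)
    (h6 : 6 * s ^ 2 = 3 ^ (2 * i) * q * T) (hT : T % 3 = 1) (hq : q % 3 ≠ 0) : False := by
  haveI : Fact (Nat.Prime 3) := ⟨by norm_num⟩
  have hs0 : s ≠ 0 := by omega
  have hT0 : T ≠ 0 := by omega
  have hq0 : q ≠ 0 := by omega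
  have hvT : padicValNat 3 T = 0 :=
    padicValNat.eq_zero_of_not_dvd (by omega)
  have hvq : padicValNat 3 q = 0 :=
    padicValNat.eq_zero_of_not_dvd (by omega)
  have h1 : padicValNat 3 (6 * s ^ 2) = 1 + 2 * padicValNat 3 s := by
    rw [padicValNat.mul (by norm_num) (pow_ne_zero _ hs0),
      padicValNat.pow _ _, show (6 : ℕ) = 3 * 2 by norm_num,
      padicValNat.mul (by norm_num) (by norm_num)]
    have : padicValNat 3 3 = 1 := padicValNat.self (by norm_num)
    have h2 : padicValNat 3 2 = 0 := padicValNat.eq_zero_of_not_dvd (by omega)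
    omega
  have h2 : padicValNat 3 (3 ^ (2 * i) * q * T) = 2 * i := by
    rw [padicValNat.mul (by positivity) hT0,
      padicValNat.mul (by positivity) hq0, padicValNat.prime_pow]
    omega
  rw [h6, h2] at h1
  omega

private lemma extract (m₁ c i u : ℕ) (hi : 1 ≤ i) (hu : u = 1 ∨ u = 2)
    (hc : (8 * c + 3) % 3 ^ (2 * i) = u * 3 ^ (2 * i - 1))
    (h : m₁ ≡ c [MOD 3 ^ (2 * i)]) :
    ∃ q, 24 * m₁ + 9 = 3 ^ (2 * i) * q ∧ q % 3 ≠ 0 := by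
  have h8 : 8 * m₁ + 3 ≡ 8 * c + 3 [MOD 3 ^ (2 * i)] := (h.mul_left 8).add_right 3
  have hmod : (8 * m₁ + 3) % 3 ^ (2 * i) = u * 3 ^ (2 * i - 1) := by
    rw [Nat.ModEq] at h8; rw [h8, hc]
  have hdm := Nat.div_add_mod (8 * m₁ + 3) (3 ^ (2 * i))
  set k := (8 * m₁ + 3) / 3 ^ (2 * i) with hk
  refine ⟨3 * k + u, ?_, by omega⟩
  have hpow : 3 ^ (2 * i) = 3 ^ (2 * i - 1) * 3 := by
    rw [← pow_succ]; congr 1; omega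
  have : 24 * m₁ + 9 = 3 * (8 * m₁ + 3) := by ring
  rw [this, ← hdm, hmod, hpow]
  ring

theorem stmt (M a s m₁ : ℕ) (hM : 1 < M) (ha : 1 ≤ a) (hs : 1 ≤ s)
    (hsum : ∑ i ∈ Finset.range M, (a + i) ^ 2 = s ^ 2)
    (hMeq : M = 24 * m₁ + 9) :
    ∀ i : ℕ, 1 ≤ i →
      ¬ m₁ ≡ 3 * (3 ^ (2 * i - 2) - 1) / 8 [MOD 3 ^ (2 * i)] ∧
      ¬ m₁ ≡ 2 * 3 ^ (2 * i - 1) + 3 * (3 ^ (2 * i - 2) - 1) / 8 [MOD 3 ^ (2 * i)] := by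
  intro i hi
  -- the sum identity
  subst hMeq
  have hS : 6 * s ^ 2 = (24 * m₁ + 9) *
      (6 * a ^ 2 + 6 * a * (24 * m₁ + 8) + (24 * m₁ + 8) * (2 * (24 * m₁ + 8) + 1)) := by
    rw [← hsum, show 24 * m₁ + 9 = (24 * m₁ + 8) + 1 by ring, sumsq]
  set T := 6 * a ^ 2 + 6 * a * (24 * m₁ + 8) + (24 * m₁ + 8) * (2 * (24 * m₁ + 8) + 1) with hTdef
  have hT : T % 3 = 1 := by
    have : T = 3 * (2 * a ^ 2 + 2 * a * (24 * m₁ + 8) + 384 * m₁ ^ 2 + 264 * m₁ + 45) + 1 := by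
      rw [hTdef]; ring
    omega
  -- the exact division facts
  obtain ⟨t, ht⟩ : ∃ t, 9 ^ (i - 1) = 8 * t + 1 := by
    clear hT hS hTdef
    induction i with
    | zero => exact ⟨0, rfl⟩
    | succ n ihn =>
      rcases Nat.eq_zero_or_pos n with rfl | hn
      · exact ⟨0, rfl⟩
      · obtain ⟨t, ht⟩ := ihn hn
        refine ⟨9 * t + 1, ?_⟩
        rw [Nat.succ_sub_one, show n = (n - 1) + 1 by omega, pow_succ, ht]
        ring
  have hpow2 : 3 ^ (2 * i - 2) = 9 ^ (i - 1) := by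
    rw [show 2 * i - 2 = 2 * (i - 1) by omega, pow_mul]; norm_num
  have hpow1 : 3 ^ (2 * i - 1) = 3 * 9 ^ (i - 1) := by
    rw [show 2 * i - 1 = 2 * (i - 1) + 1 by omega, pow_succ, pow_mul]; ring_nf
  have hc : 3 * (3 ^ (2 * i - 2) - 1) / 8 = 3 * t := by
    rw [hpow2, ht]
    simp [Nat.add_sub_cancel]
    omega
  have hpowbig : 3 ^ (2 * i) = 9 * 9 ^ (i - 1) := by
    rw [show 2 * i = 2 * (i - 1) + 2 by omega, pow_add, pow_mul]; ring_nf
  constructor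
  · intro hcon
    rw [hc] at hcon
    obtain ⟨q, hq, hq3⟩ := extract m₁ (3 * t) i 1 hi (Or.inl rfl)
      (by
        have h9 : 0 < 9 ^ (i - 1) := Nat.pow_pos (by norm_num)
        have h1 : 8 * (3 * t) + 3 = 3 * 9 ^ (i - 1) := by rw [ht]; ring
        rw [hpow1, hpowbig, h1, Nat.mod_eq_of_lt (by omega)]
        omega) hcon
    rw [hq] at hS
    exact key s T q i hs hi hS hT hq3
  · intro hcon
    rw [hc] at hcon
    obtain ⟨q, hq, hq3⟩ := extract m₁ (2 * 3 ^ (2 * i - 1) + 3 * t) i 2 hi (Or.inr rfl)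
      (by
        have h9 : 0 < 9 ^ (i - 1) := Nat.pow_pos (by norm_num)
        have h1 : 8 * (2 * 3 ^ (2 * i - 1) + 3 * t) + 3
            = 2 * (3 * 9 ^ (i - 1)) + 9 * 9 ^ (i - 1) * 5 := by rw [hpow1, ht]; ring
        rw [hpowbig, h1, Nat.add_mul_mod_self_left, Nat.mod_eq_of_lt (by omega), hpow1]) hcon
    rw [hq] at hS
    exact key s T q i hs hi hS hT hq3
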